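/- Let m ≥ 3 and Σ = (σ_ij) ∈ S⪰0^m(C_m). The following are equivalent: (1) Σ lies in the image of φ_{C_m}; (2) Σ^{(ij)} is positive semidefinite for every edge {i,j} of C_m; (3) Σ^{(ij)} is positive semidefinite for some edge {i,j} of C_m. Here Σ^{(ij)} is obtained from Σ by negating its (i,j) and (j,i) entries. -/

import Mathlib

open Matrix

/-- `Δ` is a simplicial complex with ground set all of `V`: it is closed under
taking subsets and every vertex lies in some face. -/
def IsSimplicialComplex {V : Type*} [Fintype V] [DecidableEq V]
    (Δ : Finset (Finset V)) : Prop :=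
  (∀ F ∈ Δ, ∀ F', F' ⊆ F → F' ∈ Δ) ∧ ∀ i : V, ∃ F ∈ Δ, i ∈ F

/-- The parametrization `φ_Δ`, sending `γ = (γ_{i,F})` to the matrix with entries
`φ_Δ(γ)_{ij} = ∑_{F ∈ Δ : i,j ∈ F} γ_{i,F} γ_{j,F}`. -/
def phi {V : Type*} [Fintype V] [DecidableEq V] (Δ : Finset (Finset V))
    (γ : Finset V → V → ℝ) : Matrix V V ℝ :=
  Matrix.of fun i j => ∑ F ∈ Δ, if i ∈ F ∧ j ∈ F then γ F i * γ F j else 0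

/-- The image of the parametrization `φ_Δ`. -/
def phiImage {V : Type*} [Fintype V] [DecidableEq V] (Δ : Finset (Finset V)) :
    Set (Matrix V V ℝ) :=
  Set.range (phi Δ)

/-- The edge complex of the cycle `C_m`, with faces the empty set, the
singletons, and the edges `{i, i+1}` (indices modulo `m`). -/
def cycleComplex (m : ℕ) [NeZero m] : Finset (Finset (Fin m)) :=
  {∅} ∪ Finset.univ.image (fun i : Fin m => ({i} : Finset (Fin m))) ∪
    Finset.univ.image (fun i : Fin m => ({i, i + 1} : Finset (Fin m)))

/-- The cone `S⪰0^m(C_m)` of positive semidefinite matrices with zeros at the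
non-edges of the cycle `C_m`. -/
def cyclePSDCone (m : ℕ) [NeZero m] : Set (Matrix (Fin m) (Fin m) ℝ) :=
  {S | S.PosSemidef ∧
    ∀ i j : Fin m, i ≠ j → j ≠ i + 1 → i ≠ j + 1 → S i j = 0}

/-- `Σ^{(ij)}`: the matrix obtained from `S` by negating the `(i,j)` and
`(j,i)` entries. -/
def negEntry {V : Type*} [DecidableEq V] (S : Matrix V V ℝ) (i j : V) :
    Matrix V V ℝ :=
  Matrix.of fun a b =>
    if (a = i ∧ b = j) ∨ (a = j ∧ b = i) then -S a b else S a b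

open Finset

set_option linter.unusedSectionVars false

section Aux

variable {m : ℕ} [NeZero m]

variable {m : ℕ} [NeZero m]

lemma fin_one_ne_zero (hm : 3 ≤ m) : (1 : Fin m) ≠ 0 := by
  rw [Ne, Fin.one_eq_zero_iff]; omega

lemma fin_two_ne_zero (hm : 3 ≤ m) : (2 : Fin m) ≠ 0 := by
  have h2 : ((2 : Fin m) : ℕ) = (((1:Fin m) :ℕ) + ((1:Fin m):ℕ)) % m := by
    rw [Fin.val_one', Nat.mod_eq_of_lt (show 1 < m by omega)]; rfl
  rw [Fin.val_one', Nat.mod_eq_of_lt (show 1 < m by omega)] at h2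
  rw [Nat.mod_eq_of_lt (show 1+1 < m by omega)] at h2
  intro h
  rw [h] at h2
  simp at h2

lemma fin_succ_ne (hm : 3 ≤ m) (i : Fin m) : i + 1 ≠ i := by
  intro h
  exact fin_one_ne_zero hm (by rwa [add_comm, add_eq_right] at h)

lemma fin_succ_succ_ne (hm : 3 ≤ m) (i : Fin m) : i + 1 + 1 ≠ i := by
  intro h
  rw [add_assoc, add_comm, add_eq_right] at h
  exact fin_two_ne_zero hm (by rw [← h]; exact Fin.ext (by rw [Fin.val_add, Fin.val_one', Nat.mod_eq_of_lt (show 1 < m by omega)]; rfl))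

lemma fin_ne_succ (hm : 3 ≤ m) (i : Fin m) : i ≠ i + 1 :=
  fun h => fin_succ_ne hm i h.symm

lemma edge_inj (hm : 3 ≤ m) {i j : Fin m}
    (h : ({i, i+1} : Finset (Fin m)) = {j, j+1}) : i = j := by
  have hi : i ∈ ({j, j+1} : Finset (Fin m)) := by rw [← h]; simp
  simp only [Finset.mem_insert, Finset.mem_singleton] at hi
  rcases hi with hi | hi
  · exact hi
  · have hj : j ∈ ({i, i+1} : Finset (Fin m)) := by rw [h]; simp
    simp only [Finset.mem_insert, Finset.mem_singleton] at hj
    rcases hj with hj | hj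
    · rw [hj] at hi; exact absurd hi (fin_ne_succ hm i)
    · exfalso; rw [hi] at hj; exact fin_succ_succ_ne hm j hj.symm

lemma singleton_ne_edge (hm : 3 ≤ m) (i j : Fin m) :
    ({i} : Finset (Fin m)) ≠ {j, j+1} := by
  intro h
  have h1 : j ∈ ({i} : Finset (Fin m)) := by rw [h]; simp
  have h2 : j + 1 ∈ ({i} : Finset (Fin m)) := by rw [h]; simp
  simp only [Finset.mem_singleton] at h1 h2
  exact fin_succ_ne hm j (h2.trans h1.symm)

lemma sum_cycleComplex (hm : 3 ≤ m) (f : Finset (Fin m) → ℝ) (hf : f ∅ = 0) :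
    ∑ F ∈ cycleComplex m, f F =
      (∑ i : Fin m, f {i}) + ∑ i : Fin m, f {i, i+1} := by
  have hd0 : Disjoint ({∅} : Finset (Finset (Fin m)))
      (Finset.univ.image (fun i : Fin m => ({i} : Finset (Fin m)))) := by
    simp only [Finset.disjoint_left, Finset.mem_singleton, Finset.mem_image]
    rintro F rfl ⟨i, -, h⟩
    exact absurd h (Finset.singleton_ne_empty i)
  have hd1 : Disjoint (({∅} : Finset (Finset (Fin m))) ∪
      Finset.univ.image (fun i : Fin m => ({i} : Finset (Fin m))))
      (Finset.univ.image (fun i : Fin m => ({i, i+1} : Finset (Fin m)))) := by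
    simp only [Finset.disjoint_right, Finset.mem_image, Finset.mem_union,
      Finset.mem_singleton]
    rintro F ⟨i, -, rfl⟩ h
    rcases h with h | ⟨j, -, hj⟩
    · exact absurd h (by simp)
    · exact singleton_ne_edge hm j i hj
  rw [cycleComplex, Finset.sum_union hd1, Finset.sum_union hd0,
    Finset.sum_singleton, hf, zero_add,
    Finset.sum_image (fun a _ b _ h => Finset.singleton_injective h),
    Finset.sum_image (fun a _ b _ h => edge_inj hm h)]

lemma phi_psd {V : Type*} [Fintype V] [DecidableEq V] (Δ : Finset (Finset V))
    (γ : Finset V → V → ℝ) : (phi Δ γ).PosSemidef := by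
  have key : phi Δ γ = ∑ F ∈ Δ,
      ((Matrix.replicateRow Unit (fun i => if i ∈ F then γ F i else 0))ᴴ *
        Matrix.replicateRow Unit (fun i => if i ∈ F then γ F i else 0)) := by
    ext i j
    rw [Matrix.sum_apply]
    refine Finset.sum_congr rfl fun F _ => ?_
    simp only [Matrix.mul_apply, Matrix.row, Matrix.conjTranspose]
    by_cases hi : i ∈ F <;> by_cases hj : j ∈ F <;>
      simp [phi, hi, hj, Matrix.of_apply]
  rw [key]
  exact Finset.sum_induction _ Matrix.PosSemidef (fun A B hA hB => hA.add hB)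
    Matrix.PosSemidef.zero (fun F _ => Matrix.posSemidef_conjTranspose_mul_self _)

lemma phi_diag (hm : 3 ≤ m) (γ : Finset (Fin m) → Fin m → ℝ) (i : Fin m) :
    phi (cycleComplex m) γ i i =
      γ {i} i * γ {i} i +
        (γ {i-1, i} i * γ {i-1, i} i + γ {i, i+1} i * γ {i, i+1} i) := by
  rw [phi, Matrix.of_apply, sum_cycleComplex hm _ (by simp)]
  congr 1
  · have hsing : ∀ k : Fin m,
        (if i ∈ ({k} : Finset (Fin m)) ∧ i ∈ ({k} : Finset (Fin m))
          then γ {k} i * γ {k} i else 0)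
        = if i = k then γ {k} i * γ {k} i else 0 := fun k => by
      simp [Finset.mem_singleton]
    rw [Finset.sum_congr rfl (fun k _ => hsing k), Finset.sum_ite_eq]
    simp
  · rw [← Finset.sum_subset (Finset.subset_univ ({i-1, i} : Finset (Fin m)))
      (fun k _ hk => ?_)]
    · rw [Finset.sum_pair (show i - 1 ≠ i by
        rw [Ne, sub_eq_self]; exact fin_one_ne_zero hm)]
      rw [sub_add_cancel]
      have h1 : (i ∈ ({i-1, i} : Finset (Fin m)) ∧ i ∈ ({i-1, i} : Finset (Fin m))) := by simp
      have h2 : (i ∈ ({i, i+1} : Finset (Fin m)) ∧ i ∈ ({i, i+1} : Finset (Fin m))) := by simp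
      rw [if_pos h1, if_pos h2]
    · have hik : i ∉ ({k, k+1} : Finset (Fin m)) := by
        simp only [Finset.mem_insert, Finset.mem_singleton]
        rintro (rfl | hik)
        · exact hk (by simp)
        · exact hk (by simp [show k = i - 1 by rw [hik, add_sub_cancel_right]])
      rw [if_neg (fun h => hik h.1)]

lemma phi_edge (hm : 3 ≤ m) (γ : Finset (Fin m) → Fin m → ℝ) (i : Fin m) :
    phi (cycleComplex m) γ i (i+1) = γ {i, i+1} i * γ {i, i+1} (i+1) := by
  rw [phi, Matrix.of_apply, sum_cycleComplex hm _ (by simp)]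
  have hs : (∑ k : Fin m, if i ∈ ({k} : Finset (Fin m)) ∧ i+1 ∈ ({k} : Finset (Fin m))
      then γ {k} i * γ {k} (i+1) else 0) = 0 := by
    apply Finset.sum_eq_zero
    intro k _
    rw [if_neg]
    rintro ⟨h1, h2⟩
    simp only [Finset.mem_singleton] at h1 h2
    exact fin_ne_succ hm i (h1.trans h2.symm)
  rw [hs, zero_add]
  rw [Finset.sum_eq_single_of_mem i (Finset.mem_univ i)]
  · rw [if_pos (by simp)]
  · intro k _ hk
    rw [if_neg]
    rintro ⟨h1, h2⟩
    simp only [Finset.mem_insert, Finset.mem_singleton] at h1 h2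
    rcases h1 with rfl | h1
    · exact hk rfl
    · rcases h2 with h2 | h2
      · rw [← h2] at h1; exact fin_succ_succ_ne hm i h1.symm
      · rw [h1] at h2; exact fin_succ_ne hm (k+1) h2

lemma phi_nonedge (hm : 3 ≤ m) (γ : Finset (Fin m) → Fin m → ℝ) (i j : Fin m)
    (hij : i ≠ j) (hji1 : j ≠ i + 1) (hij1 : i ≠ j + 1) :
    phi (cycleComplex m) γ i j = 0 := by
  rw [phi, Matrix.of_apply, sum_cycleComplex hm _ (by simp)]
  rw [Finset.sum_eq_zero, Finset.sum_eq_zero, add_zero]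
  · intro k _
    rw [if_neg]
    rintro ⟨h1, h2⟩
    simp only [Finset.mem_insert, Finset.mem_singleton] at h1 h2
    rcases h1 with rfl | rfl
    · rcases h2 with rfl | rfl
      · exact hij rfl
      · exact hji1 rfl
    · rcases h2 with rfl | h2
      · exact hij1 rfl
      · exact hij (by rw [h2])
  · intro k _
    rw [if_neg]
    rintro ⟨h1, h2⟩
    simp only [Finset.mem_singleton] at h1 h2
    exact hij (h1.trans h2.symm)

lemma phi_symm {V : Type*} [Fintype V] [DecidableEq V] (Δ : Finset (Finset V))
    (γ : Finset V → V → ℝ) (i j : V) : phi Δ γ i j = phi Δ γ j i := by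
  have := (phi_psd Δ γ).1
  have h := Matrix.IsHermitian.apply this j i
  simpa using h

lemma fin_sub_one_ne (hm : 3 ≤ m) (i : Fin m) : i - 1 ≠ i := by
  rw [Ne, sub_eq_self]; exact fin_one_ne_zero hm

lemma mem_phiImage_of_bc (hm : 3 ≤ m) (M : Matrix (Fin m) (Fin m) ℝ)
    (hsym : ∀ i j, M i j = M j i)
    (hsparse : ∀ i j : Fin m, i ≠ j → j ≠ i+1 → i ≠ j+1 → M i j = 0)
    (b c : Fin m → ℝ)
    (hbc : ∀ i, c i * b (i+1) = M i (i+1))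
    (hle : ∀ i, b i^2 + c i^2 ≤ M i i) :
    M ∈ phiImage (cycleComplex m) := by
  classical
  set a : Fin m → ℝ := fun i => Real.sqrt (M i i - b i^2 - c i^2) with ha
  set γ : Finset (Fin m) → Fin m → ℝ := fun F i =>
    if F = {i} then a i else if F = {i, i+1} then c i
      else if F = {i-1, i} then b i else 0 with hγ
  have hγ1 : ∀ i, γ {i} i = a i := fun i => if_pos rfl
  have hγ2 : ∀ i, γ {i, i+1} i = c i := by
    intro i
    rw [hγ]
    simp only
    rw [if_neg (fun h => singleton_ne_edge hm i i h.symm)]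
    simp
  have hγ3 : ∀ i, γ {i-1, i} i = b i := by
    intro i
    have hne1 : ({i-1, i} : Finset (Fin m)) ≠ {i} := by
      intro h
      have : i - 1 ∈ ({i} : Finset (Fin m)) := by rw [← h]; simp
      simp only [Finset.mem_singleton] at this
      exact fin_sub_one_ne hm i this
    have hne2 : ({i-1, i} : Finset (Fin m)) ≠ {i, i+1} := by
      intro h
      have : i - 1 ∈ ({i, i+1} : Finset (Fin m)) := by rw [← h]; simp
      simp only [Finset.mem_insert, Finset.mem_singleton] at this
      rcases this with h1 | h1
      · exact fin_sub_one_ne hm i h1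
      · have h2 : i - 1 + 1 = i + 1 + 1 := by rw [h1]
        rw [sub_add_cancel] at h2
        exact fin_succ_succ_ne hm i h2.symm
    rw [hγ]
    simp only
    rw [if_neg hne1, if_neg hne2]
    simp
  have hγ4 : ∀ i, γ {i, i+1} (i+1) = b (i+1) := by
    intro i
    have : ({i, i+1} : Finset (Fin m)) = {(i+1)-1, i+1} := by
      rw [add_sub_cancel_right]
    rw [this, hγ3]
  have hsq : ∀ i, a i * a i = M i i - b i^2 - c i^2 := fun i =>
    Real.mul_self_sqrt (by have := hle i; linarith)
  refine ⟨γ, ?_⟩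
  ext i j
  by_cases hij : i = j
  · subst hij
    rw [phi_diag hm γ i, hγ1, hγ2, hγ3, hsq]
    ring_nf
  · by_cases hj : j = i + 1
    · subst hj
      rw [phi_edge hm γ i, hγ2, hγ4, hbc]
    · by_cases hi : i = j + 1
      · subst hi
        rw [phi_symm, phi_edge hm γ j, hγ2, hγ4, hbc, hsym]
      · rw [phi_nonedge hm γ i j hij hj hi, hsparse i j hij hj hi]

lemma psd_of_mem {V : Type*} [Fintype V] [DecidableEq V] {Δ : Finset (Finset V)}
    {S : Matrix V V ℝ} (h : S ∈ phiImage Δ) : S.PosSemidef := by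
  obtain ⟨γ, rfl⟩ := h
  exact phi_psd Δ γ

lemma bc_of_mem (hm : 3 ≤ m) (S : Matrix (Fin m) (Fin m) ℝ)
    (h : S ∈ phiImage (cycleComplex m)) :
    ∃ b c : Fin m → ℝ,
      (∀ i, c i * b (i+1) = S i (i+1)) ∧ (∀ i, b i^2 + c i^2 ≤ S i i) := by
  obtain ⟨γ, rfl⟩ := h
  refine ⟨fun i => γ {i-1, i} i, fun i => γ {i, i+1} i, fun i => ?_, fun i => ?_⟩
  · show γ {i, i+1} i * γ {(i+1)-1, i+1} (i+1) = _
    have hii : (i + 1 - 1 : Fin m) = i := by rw [add_sub_cancel_right]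
    rw [hii, phi_edge hm]
  · rw [phi_diag hm]
    nlinarith [sq_nonneg (γ ({i} : Finset (Fin m)) i)]

lemma negEntry_diag (S : Matrix (Fin m) (Fin m) ℝ) (hm : 3 ≤ m) (i₀ i : Fin m) :
    negEntry S i₀ (i₀+1) i i = S i i := by
  rw [negEntry, Matrix.of_apply, if_neg]
  rintro (⟨h1, h2⟩ | ⟨h1, h2⟩)
  · rw [h1] at h2; exact fin_ne_succ hm i₀ h2
  · rw [h2] at h1; exact fin_ne_succ hm i₀ h1

lemma negEntry_edge (S : Matrix (Fin m) (Fin m) ℝ) (hm : 3 ≤ m) (i₀ i : Fin m) :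
    negEntry S i₀ (i₀+1) i (i+1) =
      if i = i₀ then -S i (i+1) else S i (i+1) := by
  rw [negEntry, Matrix.of_apply]
  by_cases h : i = i₀
  · subst h
    rw [if_pos (Or.inl ⟨rfl, rfl⟩), if_pos rfl]
  · rw [if_neg, if_neg h]
    rintro (⟨rfl, -⟩ | ⟨h1, h2⟩)
    · exact h rfl
    · rw [h1] at h2
      exact fin_succ_succ_ne hm i₀ h2

lemma negEntry_symm (S : Matrix (Fin m) (Fin m) ℝ)
    (hsym : ∀ i j, S i j = S j i) (i₀ : Fin m) (i j : Fin m) :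
    negEntry S i₀ (i₀+1) i j = negEntry S i₀ (i₀+1) j i := by
  simp only [negEntry, Matrix.of_apply, hsym i j]
  exact if_congr (by tauto) rfl rfl

lemma negEntry_sparse (S : Matrix (Fin m) (Fin m) ℝ) (hS : S ∈ cyclePSDCone m)
    (i₀ : Fin m) (i j : Fin m) (h1 : i ≠ j) (h2 : j ≠ i+1) (h3 : i ≠ j+1) :
    negEntry S i₀ (i₀+1) i j = 0 := by
  simp only [negEntry, Matrix.of_apply, hS.2 i j h1 h2 h3, neg_zero, ite_self]

lemma S_symm {S : Matrix (Fin m) (Fin m) ℝ} (hS : S ∈ cyclePSDCone m) :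
    ∀ i j, S i j = S j i := by
  intro i j
  have h := Matrix.IsHermitian.apply hS.1.1 j i
  simpa using h

lemma negEntry_psd_of_mem (hm : 3 ≤ m) (S : Matrix (Fin m) (Fin m) ℝ)
    (hS : S ∈ cyclePSDCone m) (h : S ∈ phiImage (cycleComplex m)) (i₀ : Fin m) :
    (negEntry S i₀ (i₀+1)).PosSemidef := by
  obtain ⟨b, c, hbc, hle⟩ := bc_of_mem hm S h
  set c' : Fin m → ℝ := fun i => if i = i₀ then -c i else c i with hc'
  have hmem : negEntry S i₀ (i₀+1) ∈ phiImage (cycleComplex m) := by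
    apply mem_phiImage_of_bc hm _ (fun i j => negEntry_symm S (S_symm hS) i₀ i j)
      (negEntry_sparse S hS i₀) b c'
    · intro i
      rw [negEntry_edge S hm i₀ i, hc']
      simp only
      by_cases hi : i = i₀
      · subst hi
        rw [← hbc i]
        simp
      · simp only [if_neg hi]
        exact hbc i
    · intro i
      rw [negEntry_diag S hm i₀ i, hc']
      simp only
      by_cases hi : i = i₀
      · subst hi
        simpa using hle i
      · simp only [if_neg hi]
        exact hle i
  exact psd_of_mem hmem

lemma bilin_symm (A : Matrix (Fin m) (Fin m) ℝ) (hsym : ∀ i j, A i j = A j i)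
    (z w : Fin m → ℝ) : z ⬝ᵥ A *ᵥ w = w ⬝ᵥ A *ᵥ z := by
  simp only [dotProduct, Matrix.mulVec, Finset.mul_sum]
  rw [Finset.sum_comm]
  exact Finset.sum_congr rfl fun i _ => Finset.sum_congr rfl fun j _ => by
    rw [hsym j i]; ring

lemma exists_pos_solution (A : Matrix (Fin m) (Fin m) ℝ)
    (hA : A.PosDef) (hsym : ∀ i j, A i j = A j i)
    (hoff : ∀ i j, i ≠ j → A i j ≤ 0) :
    ∃ x : Fin m → ℝ, (∀ i, 0 < x i) ∧ A *ᵥ x = 1 := by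
  have hdet : IsUnit A.det := isUnit_iff_ne_zero.mpr hA.det_pos.ne'
  set x : Fin m → ℝ := A⁻¹ *ᵥ 1 with hxdef
  have hx : A *ᵥ x = 1 := by
    rw [hxdef, Matrix.mulVec_mulVec, Matrix.mul_nonsing_inv _ hdet,
      Matrix.one_mulVec]
  set y : Fin m → ℝ := fun i => |x i| with hydef
  have h2 : x ⬝ᵥ A *ᵥ y = ∑ i, y i := by
    rw [bilin_symm A hsym x y, hx]
    simp [dotProduct]
  have h3 : y ⬝ᵥ A *ᵥ x = ∑ i, y i := by rw [hx]; simp [dotProduct]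
  have h4 : x ⬝ᵥ A *ᵥ x = ∑ i, x i := by rw [hx]; simp [dotProduct]
  have hyAy : y ⬝ᵥ A *ᵥ y ≤ x ⬝ᵥ A *ᵥ x := by
    simp only [dotProduct, Matrix.mulVec, Finset.mul_sum]
    refine Finset.sum_le_sum fun i _ => Finset.sum_le_sum fun j _ => ?_
    rcases eq_or_ne i j with rfl | hij
    · have habs : |x i| * |x i| = x i * x i := abs_mul_abs_self (x i)
      have : y i * (A i i * y i) = x i * (A i i * x i) := by
        rw [hydef]; simp only; linear_combination A i i * habs
      exact le_of_eq this
    · have h1 : x i * x j ≤ |x i| * |x j| := by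
        rw [← abs_mul]; exact le_abs_self _
      have h2 := mul_le_mul_of_nonpos_left h1 (hoff i j hij)
      rw [hydef]
      simp only
      have e1 : |x i| * (A i j * |x j|) = A i j * (|x i| * |x j|) := by ring
      have e2 : x i * (A i j * x j) = A i j * (x i * x j) := by ring
      rw [e1, e2]
      exact h2
  have hsum : ∑ i, x i ≤ ∑ i, y i :=
    Finset.sum_le_sum fun i _ => le_abs_self (x i)
  have hexp : (y - x) ⬝ᵥ A *ᵥ (y - x) ≤ 0 := by
    have hmv : A *ᵥ (y - x) = A *ᵥ y - A *ᵥ x := Matrix.mulVec_sub A y x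
    rw [hmv, sub_dotProduct, dotProduct_sub, dotProduct_sub]
    have := hyAy
    rw [h4] at this
    linarith [h2, h3, h4, hsum, this]
  have hyx : y = x := by
    by_contra hne
    have hne' : y - x ≠ 0 := fun h => hne (by rwa [sub_eq_zero] at h)
    have := hA.dotProduct_mulVec_pos hne'
    have h0 : (0:ℝ) < (y - x) ⬝ᵥ A *ᵥ (y - x) := by simpa using this
    linarith
  have hx0 : ∀ i, 0 ≤ x i := fun i => by
    have : |x i| = x i := congrFun hyx i
    rw [← this]; exact abs_nonneg _
  refine ⟨x, fun i => ?_, hx⟩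
  rcases lt_or_eq_of_le (hx0 i) with h | h
  · exact h
  · exfalso
    have h1 : (A *ᵥ x) i = 1 := by rw [hx]; rfl
    have h1' : ∑ j, A i j * x j = 1 := h1
    have h2 : ∑ j, A i j * x j ≤ 0 := by
      apply Finset.sum_nonpos
      intro j _
      rcases eq_or_ne j i with rfl | hij
      · rw [← h]; simp
      · exact mul_nonpos_of_nonpos_of_nonneg (hoff i j (Ne.symm hij)) (hx0 j)
    linarith

lemma exists_neg_psd (hm : 3 ≤ m) (S : Matrix (Fin m) (Fin m) ℝ)
    (hS : S ∈ cyclePSDCone m) (i₀ : Fin m)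
    (hT : (negEntry S i₀ (i₀+1)).PosSemidef) :
    ∃ A : Matrix (Fin m) (Fin m) ℝ, A.PosSemidef ∧
      (∀ i, A i i = S i i) ∧
      (∀ i, A i (i+1) = -|S i (i+1)|) ∧
      (∀ i j, A i j = A j i) ∧
      (∀ i j : Fin m, i ≠ j → j ≠ i+1 → i ≠ j+1 → A i j = 0) := by
  classical
  set ε : Fin m → ℝ := fun i => if 0 < S i (i+1) then (-1:ℝ) else 1 with hε
  have hεpm : ∀ i, ε i * ε i = 1 := by
    intro i; rw [hε]; simp only; split_ifs <;> norm_num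
  have hεedge : ∀ i, ε i * S i (i+1) = -|S i (i+1)| := by
    intro i; rw [hε]; simp only; split_ifs with h
    · rw [abs_of_pos h]; ring
    · push_neg at h
      rw [abs_of_nonpos h]; ring
  have hprodpm : (∏ i, ε i) = 1 ∨ (∏ i, ε i) = -1 := by
    rw [← mul_self_eq_one_iff, ← Finset.prod_mul_distrib]
    rw [Finset.prod_congr rfl (fun i _ => hεpm i)]
    exact Finset.prod_const_one
  -- choose S* and σ
  obtain ⟨Sstar, σ, hpsd, hdiag, hsym, hsparse, hσpm, hσedge, hσprod⟩ :
      ∃ (Sstar : Matrix (Fin m) (Fin m) ℝ) (σ : Fin m → ℝ),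
        Sstar.PosSemidef ∧ (∀ i, Sstar i i = S i i) ∧
        (∀ i j, Sstar i j = Sstar j i) ∧
        (∀ i j : Fin m, i ≠ j → j ≠ i+1 → i ≠ j+1 → Sstar i j = 0) ∧
        (∀ i, σ i * σ i = 1) ∧
        (∀ i, σ i * Sstar i (i+1) = -|S i (i+1)|) ∧
        (∏ i, σ i) = 1 := by
    rcases hprodpm with hP | hP
    · exact ⟨S, ε, hS.1, fun i => rfl, S_symm hS, hS.2, hεpm, hεedge, hP⟩
    · have herase : ∀ τ : Fin m → ℝ, (∏ i, τ i) = τ i₀ * ∏ i ∈ Finset.univ.erase i₀, τ i :=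
        fun τ => (Finset.mul_prod_erase Finset.univ τ (Finset.mem_univ i₀)).symm
      have hup : ∀ v : ℝ, (∏ i, Function.update ε i₀ v i) = v * ∏ i ∈ Finset.univ.erase i₀, ε i := by
        intro v
        rw [herase (Function.update ε i₀ v), Function.update_self]
        congr 1
        exact Finset.prod_congr rfl fun j hj =>
          Function.update_of_ne (Finset.ne_of_mem_erase hj) _ _
      have hPer : ε i₀ * ∏ i ∈ Finset.univ.erase i₀, ε i = -1 := by
        rw [← herase]; exact hP
      set σ := Function.update ε i₀ (-ε i₀) with hσ
      have hσprod : (∏ i, σ i) = 1 := by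
        rw [hσ, hup]; nlinarith [hPer]
      have hσpm : ∀ i, σ i * σ i = 1 := by
        intro i
        rcases eq_or_ne i i₀ with rfl | hi
        · rw [hσ, Function.update_self]; nlinarith [hεpm i]
        · rw [hσ, Function.update_of_ne hi]; exact hεpm i
      by_cases h0 : S i₀ (i₀+1) = 0
      · refine ⟨S, σ, hS.1, fun i => rfl, S_symm hS, hS.2, hσpm, ?_, hσprod⟩
        intro i
        rcases eq_or_ne i i₀ with rfl | hi
        · rw [h0]; simp
        · rw [hσ, Function.update_of_ne hi]; exact hεedge i
      · refine ⟨negEntry S i₀ (i₀+1), σ, hT, fun i => negEntry_diag S hm i₀ i,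
          negEntry_symm S (S_symm hS) i₀, negEntry_sparse S hS i₀, hσpm, ?_, hσprod⟩
        intro i
        rw [negEntry_edge S hm i₀ i]
        rcases eq_or_ne i i₀ with rfl | hi
        · rw [if_pos rfl, hσ, Function.update_self]
          have := hεedge i
          nlinarith [hεpm i, this]
        · rw [if_neg hi, hσ, Function.update_of_ne hi]; exact hεedge i
  -- the sign vector χ
  set χ : Fin m → ℝ := fun i => ∏ j ∈ Finset.univ.filter (fun j => j < i), σ j with hχ
  have hχpm : ∀ i, χ i * χ i = 1 := by
    intro i
    rw [hχ]
    simp only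
    rw [← Finset.prod_mul_distrib, Finset.prod_congr rfl (fun j _ => hσpm j)]
    exact Finset.prod_const_one
  have hχedge : ∀ i, χ i * χ (i+1) = σ i := by
    intro i
    by_cases hi : (i:ℕ) + 1 = m
    · have hi10 : i + 1 = 0 := by
        apply Fin.ext
        rw [Fin.val_add, Fin.val_one']
        simp [Nat.mod_eq_of_lt (show 1 < m by omega), hi]
    -- χ (i+1) = χ 0 = 1
      have hz : χ (i+1) = 1 := by
        rw [hi10, hχ]
        simp only
        rw [Finset.filter_false_of_mem, Finset.prod_empty]
        intro j _
        rw [Fin.lt_def]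
        simp
      have hlast : Finset.univ.filter (fun j => j < i) = Finset.univ.erase i := by
        ext j
        simp only [Finset.mem_filter, Finset.mem_univ, true_and, Finset.mem_erase,
          and_true, Fin.lt_def, Ne, Fin.ext_iff]
        omega
      have hers : σ i * ∏ j ∈ Finset.univ.erase i, σ j = 1 := by
        rw [Finset.mul_prod_erase Finset.univ σ (Finset.mem_univ i)]
        exact hσprod
      rw [hz, hχ]
      simp only
      rw [hlast, mul_one]
      linear_combination σ i * hers - (∏ j ∈ Finset.univ.erase i, σ j) * hσpm i
    · have hval : ((i+1 : Fin m) : ℕ) = (i:ℕ) + 1 := by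
        rw [Fin.val_add, Fin.val_one', Nat.mod_eq_of_lt (show 1 < m by omega)]
        exact Nat.mod_eq_of_lt (by omega)
      have hins : Finset.univ.filter (fun j => j < i + 1) =
          insert i (Finset.univ.filter (fun j => j < i)) := by
        ext j
        simp only [Finset.mem_filter, Finset.mem_univ, true_and, Finset.mem_insert]
        rw [Fin.lt_def, Fin.lt_def, hval]
        constructor
        · intro h
          rcases Nat.lt_succ_iff_lt_or_eq.mp h with h' | h'
          · exact Or.inr h'
          · exact Or.inl (Fin.ext h')
        · rintro (rfl | h) <;> omega
      have hnotmem : i ∉ Finset.univ.filter (fun j => j < i) := by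
        simp only [Finset.mem_filter, Finset.mem_univ, true_and]
        exact lt_irrefl i
      rw [hχ]
      simp only
      rw [hins, Finset.prod_insert hnotmem]
      linear_combination σ i * hχpm i
  -- assemble A
  refine ⟨Matrix.of fun i j => χ i * χ j * Sstar i j, ?_, ?_, ?_, ?_, ?_⟩
  · rw [Matrix.posSemidef_iff_dotProduct_mulVec]; constructor
    · ext i j
      simp only [Matrix.conjTranspose_apply, Matrix.of_apply, star_trivial]
      rw [hsym j i]; ring
    · intro x
      have hform : star x ⬝ᵥ (Matrix.of fun i j => χ i * χ j * Sstar i j) *ᵥ x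
          = star (fun i => χ i * x i) ⬝ᵥ Sstar *ᵥ (fun i => χ i * x i) := by
        simp only [star_trivial, dotProduct, Matrix.mulVec, Matrix.of_apply,
          Finset.mul_sum]
        exact Finset.sum_congr rfl fun i _ => Finset.sum_congr rfl fun j _ => by ring
      rw [hform]
      exact hpsd.dotProduct_mulVec_nonneg _
  · intro i
    simp only [Matrix.of_apply]
    rw [hdiag i]
    linear_combination (S i i) * hχpm i
  · intro i
    simp only [Matrix.of_apply]
    rw [← hσedge i, ← hχedge i]
  · intro i j
    simp only [Matrix.of_apply]
    rw [hsym i j]; ring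
  · intro i j h1 h2 h3
    simp only [Matrix.of_apply]
    rw [hsparse i j h1 h2 h3, mul_zero]

lemma diag_nonneg {S : Matrix (Fin m) (Fin m) ℝ} (h : S.PosSemidef) (i : Fin m) :
    0 ≤ S i i := by
  have := h.dotProduct_mulVec_nonneg (Pi.single i 1)
  have heq : star (Pi.single i 1) ⬝ᵥ S *ᵥ (Pi.single i 1 : Fin m → ℝ) = S i i := by
    simp [dotProduct, Matrix.mulVec, Pi.single_apply, Finset.mul_sum]
  rw [heq] at this
  exact this

lemma bc_exists (hm : 3 ≤ m) (S : Matrix (Fin m) (Fin m) ℝ)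
    (hS : S ∈ cyclePSDCone m) (i₀ : Fin m)
    (hT : (negEntry S i₀ (i₀+1)).PosSemidef) :
    ∃ b c : Fin m → ℝ, (∀ i, c i * b (i+1) = S i (i+1)) ∧
      (∀ i, b i^2 + c i^2 ≤ S i i) := by
  classical
  obtain ⟨A, hApsd, hAdiag, hAedge, hAsym, hAsparse⟩ :=
    exists_neg_psd hm S hS i₀ hT
  set r : Fin m → ℝ := fun i => |S i (i+1)| with hrdef
  set d : Fin m → ℝ := fun i => S i i with hddef
  have hr0 : ∀ i, 0 ≤ r i := fun i => abs_nonneg _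
  have hAedge' : ∀ i, A i (i+1) = -r i := hAedge
  have hArev : ∀ i : Fin m, A i (i-1) = -r (i-1) := by
    intro i
    rw [hAsym i (i-1)]
    have := hAedge' (i-1)
    rwa [sub_add_cancel] at this
  have hAoff : ∀ i j, i ≠ j → A i j ≤ 0 := by
    intro i j hij
    by_cases h1 : j = i + 1
    · subst h1; rw [hAedge']; simp [hr0 i]
    · by_cases h2 : i = j + 1
      · rw [hAsym i j, h2, hAedge']; simp [hr0 j]
      · rw [hAsparse i j hij h1 h2]
  have hsub_ne : ∀ i : Fin m, i - 1 ≠ i + 1 := by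
    intro i h
    have h2 : i - 1 + 1 = i + 1 + 1 := by rw [h]
    rw [sub_add_cancel] at h2
    exact fin_succ_succ_ne hm i h2.symm
  have key : ∀ ε : ℝ, 0 < ε → ε ≤ 1 → ∃ b c : Fin m → ℝ,
      (∀ i, c i * b (i+1) = r i) ∧ (∀ i, b i^2 + c i^2 ≤ d i + ε) ∧
      (∀ i, 0 ≤ b i ∧ 0 ≤ c i) := by
    intro ε hε hε1
    set B := A + ε • (1 : Matrix (Fin m) (Fin m) ℝ) with hBdef
    have hBapp : ∀ i j, B i j = A i j + if i = j then ε else 0 := by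
      intro i j
      rw [hBdef]
      simp [Matrix.add_apply, Matrix.smul_apply, Matrix.one_apply, mul_ite]
    have hBsym : ∀ i j, B i j = B j i := by
      intro i j
      rw [hBapp, hBapp, hAsym i j]
      congr 1
      simp [eq_comm]
    have hBoff : ∀ i j, i ≠ j → B i j ≤ 0 := by
      intro i j hij
      rw [hBapp, if_neg hij, add_zero]
      exact hAoff i j hij
    have hBpd : B.PosDef := by
      rw [Matrix.posDef_iff_dotProduct_mulVec]; constructor
      · ext i j
        simp only [Matrix.conjTranspose_apply, star_trivial]
        exact hBsym j i
      · intro x hx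
        have hform : star x ⬝ᵥ B *ᵥ x
            = star x ⬝ᵥ A *ᵥ x + ε * ∑ i, x i * x i := by
          rw [hBdef, Matrix.add_mulVec, dotProduct_add]
          congr 1
          rw [Matrix.smul_mulVec, Matrix.one_mulVec, dotProduct_smul]
          simp [dotProduct, star_trivial]
        rw [hform]
        have h1 := hApsd.dotProduct_mulVec_nonneg x
        have h2 : 0 < ∑ i, x i * x i := by
          obtain ⟨i, hi⟩ := Function.ne_iff.mp hx
          exact Finset.sum_pos' (fun j _ => mul_self_nonneg (x j))
            ⟨i, Finset.mem_univ i, mul_self_pos.mpr hi⟩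
        have : (0:ℝ) < ε * ∑ i, x i * x i := mul_pos hε h2
        positivity
    obtain ⟨x, hxpos, hxsol⟩ := exists_pos_solution B hBpd hBsym hBoff
    have hdd : ∀ i, r (i-1) * x (i-1) + r i * x (i+1) ≤ (d i + ε) * x i := by
      intro i
      have h1 : (B *ᵥ x) i = 1 := by rw [hxsol]; rfl
      have h1' : ∑ j, B i j * x j = 1 := h1
      have hmem1 : (i-1 : Fin m) ∉ ({i, i+1} : Finset (Fin m)) := by
        simp only [Finset.mem_insert, Finset.mem_singleton]
        rintro (h | h)
        · exact fin_sub_one_ne hm i h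
        · exact hsub_ne i h
      have hmem2 : i ∉ ({i+1} : Finset (Fin m)) := by
        simp only [Finset.mem_singleton]
        exact fin_ne_succ hm i
      have hsplit : ∑ j, B i j * x j =
          B i (i-1) * x (i-1) + (B i i * x i + B i (i+1) * x (i+1)) := by
        rw [← Finset.sum_subset
          (Finset.subset_univ ({i-1, i, i+1} : Finset (Fin m)))]
        · rw [Finset.sum_insert hmem1, Finset.sum_insert hmem2,
            Finset.sum_singleton]
        · intro j _ hj
          simp only [Finset.mem_insert, Finset.mem_singleton, not_or] at hj
          obtain ⟨hj1, hj2, hj3⟩ := hj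
          have hij : i ≠ j := fun h => hj2 h.symm
          have hji1 : j ≠ i + 1 := hj3
          have hij1 : i ≠ j + 1 := by
            intro h
            apply hj1
            rw [h, add_sub_cancel_right]
          rw [hBapp, if_neg hij, add_zero, hAsparse i j hij hji1 hij1, zero_mul]
      have hv1 : B i (i-1) = -r (i-1) := by
        rw [hBapp, if_neg (fun h => fin_sub_one_ne hm i h.symm), add_zero, hArev]
      have hv2 : B i i = d i + ε := by
        rw [hBapp, if_pos rfl, hAdiag]
      have hv3 : B i (i+1) = -r i := by
        rw [hBapp, if_neg (fin_ne_succ hm i), add_zero, hAedge']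
      rw [hsplit, hv1, hv2, hv3] at h1'
      nlinarith [h1']
    refine ⟨fun i => Real.sqrt (r (i-1) * x (i-1) / x i),
      fun i => Real.sqrt (r i * x (i+1) / x i), fun i => ?_, fun i => ?_, fun i => ?_⟩
    · have hb : (fun i => Real.sqrt (r (i-1) * x (i-1) / x i)) (i+1)
          = Real.sqrt (r i * x i / x (i+1)) := by
        simp only
        rw [add_sub_cancel_right]
      have h0 : (0:ℝ) ≤ r i * x (i+1) / x i :=
        div_nonneg (mul_nonneg (hr0 i) (hxpos _).le) (hxpos i).le
      rw [hb, ← Real.sqrt_mul h0]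
      have hq : r i * x (i+1) / x i * (r i * x i / x (i+1)) = (r i)^2 := by
        field_simp [(hxpos i).ne', (hxpos (i+1)).ne']
      rw [hq, Real.sqrt_sq (hr0 i)]
    · have ha1 : (0:ℝ) ≤ r (i-1) * x (i-1) / x i :=
        div_nonneg (mul_nonneg (hr0 _) (hxpos _).le) (hxpos i).le
      have ha2 : (0:ℝ) ≤ r i * x (i+1) / x i :=
        div_nonneg (mul_nonneg (hr0 _) (hxpos _).le) (hxpos i).le
      rw [Real.sq_sqrt ha1, Real.sq_sqrt ha2]
      rw [← add_div, div_le_iff₀ (hxpos i)]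
      exact hdd i
    · exact ⟨Real.sqrt_nonneg _, Real.sqrt_nonneg _⟩
  -- pass to the limit
  set e : ℕ → ℝ := fun n => 1 / ((n:ℝ) + 1) with hedef
  have he_pos : ∀ n : ℕ, 0 < e n := fun n => by positivity
  have he_le1 : ∀ n : ℕ, e n ≤ 1 := by
    intro n
    rw [hedef]
    simp only
    rw [div_le_one (by positivity)]
    linarith [Nat.cast_nonneg (α := ℝ) n]
  choose bs cs hbc' hle' hnn' using fun n => key (e n) (he_pos n) (he_le1 n)
  have hd0 : ∀ i, 0 ≤ d i := fun i => diag_nonneg hS.1 i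
  set D : ℝ := (∑ i, d i) + 1 with hD
  have hdD : ∀ i, d i + 1 ≤ D := by
    intro i
    have := Finset.single_le_sum (f := d) (fun j _ => hd0 j) (Finset.mem_univ i)
    rw [hD]; linarith
  have hbound : ∀ (n : ℕ) i, |bs n i| ≤ Real.sqrt D ∧ |cs n i| ≤ Real.sqrt D := by
    intro n i
    have h1 := hle' n i
    have h2 : d i + e n ≤ D := le_trans (by linarith [he_le1 n]) (hdD i)
    have hb2 : bs n i ^ 2 ≤ D := by nlinarith [sq_nonneg (cs n i)]
    have hc2 : cs n i ^ 2 ≤ D := by nlinarith [sq_nonneg (bs n i)]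
    constructor
    · rw [← Real.sqrt_sq_eq_abs]
      exact Real.sqrt_le_sqrt hb2
    · rw [← Real.sqrt_sq_eq_abs]
      exact Real.sqrt_le_sqrt hc2
  set v : ℕ → (Fin m → ℝ) × (Fin m → ℝ) := fun n => (bs n, cs n) with hv
  have hvmem : ∀ n, v n ∈ Metric.closedBall (0 : (Fin m → ℝ) × (Fin m → ℝ))
      (Real.sqrt D) := by
    intro n
    rw [Metric.mem_closedBall, dist_zero_right, Prod.norm_def]
    have hR0 : (0:ℝ) ≤ Real.sqrt D := Real.sqrt_nonneg _
    apply max_le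
    · rw [pi_norm_le_iff_of_nonneg hR0]
      intro i
      rw [Real.norm_eq_abs]
      exact (hbound n i).1
    · rw [pi_norm_le_iff_of_nonneg hR0]
      intro i
      rw [Real.norm_eq_abs]
      exact (hbound n i).2
  obtain ⟨p, -, φ, hφmono, hφtend⟩ :=
    tendsto_subseq_of_bounded Metric.isBounded_closedBall hvmem
  have hb_t : ∀ i, Filter.Tendsto (fun k => bs (φ k) i) Filter.atTop (nhds (p.1 i)) := by
    intro i
    have hc : Continuous fun q : (Fin m → ℝ) × (Fin m → ℝ) => q.1 i :=
      (continuous_apply i).comp continuous_fst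
    exact (hc.continuousAt.tendsto).comp hφtend
  have hc_t : ∀ i, Filter.Tendsto (fun k => cs (φ k) i) Filter.atTop (nhds (p.2 i)) := by
    intro i
    have hc : Continuous fun q : (Fin m → ℝ) × (Fin m → ℝ) => q.2 i :=
      (continuous_apply i).comp continuous_snd
    exact (hc.continuousAt.tendsto).comp hφtend
  have heq : ∀ i, p.2 i * p.1 (i+1) = r i := by
    intro i
    have h1 := (hc_t i).mul (hb_t (i+1))
    have h2 : (fun k => cs (φ k) i * bs (φ k) (i+1)) = fun _ => r i :=
      funext fun k => hbc' (φ k) i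
    rw [h2] at h1
    exact tendsto_nhds_unique h1 tendsto_const_nhds
  have hineq : ∀ i, p.1 i ^ 2 + p.2 i ^ 2 ≤ d i := by
    intro i
    have hL : Filter.Tendsto (fun k => bs (φ k) i ^ 2 + cs (φ k) i ^ 2)
        Filter.atTop (nhds (p.1 i ^ 2 + p.2 i ^ 2)) :=
      ((hb_t i).pow 2).add ((hc_t i).pow 2)
    have hR : Filter.Tendsto (fun k => d i + e (φ k)) Filter.atTop (nhds (d i)) := by
      have h0 : Filter.Tendsto (fun k => e (φ k)) Filter.atTop (nhds 0) :=
        tendsto_one_div_add_atTop_nhds_zero_nat.comp hφmono.tendsto_atTop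
      have h1 : Filter.Tendsto (fun _ : ℕ => d i) Filter.atTop (nhds (d i)) :=
        tendsto_const_nhds
      have := h1.add h0
      simpa using this
    exact le_of_tendsto_of_tendsto' hL hR (fun k => hle' (φ k) i)
  refine ⟨p.1, fun i => if 0 ≤ S i (i+1) then p.2 i else -p.2 i,
    fun i => ?_, fun i => ?_⟩
  · show (if 0 ≤ S i (i+1) then p.2 i else -p.2 i) * p.1 (i+1) = S i (i+1)
    by_cases h : 0 ≤ S i (i+1)
    · rw [if_pos h, heq i]
      exact abs_of_nonneg h
    · push_neg at h
      rw [if_neg (not_le.mpr h), neg_mul, heq i]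
      rw [show r i = |S i (i+1)| from rfl, abs_of_neg h, neg_neg]
  · show p.1 i ^ 2 + (if 0 ≤ S i (i+1) then p.2 i else -p.2 i) ^ 2 ≤ S i i
    by_cases h : 0 ≤ S i (i+1)
    · rw [if_pos h]
      exact hineq i
    · rw [if_neg h, neg_sq]
      exact hineq i

end Aux

/-- for `Σ ∈ S⪰0^m(C_m)` the following are equivalent:
(1) `Σ ∈ im(φ_{C_m})`; (2) `Σ^{(ij)}` is positive semidefinite for every edge
`{i, i+1}` of `C_m`; (3) `Σ^{(ij)}` is positive semidefinite for some edge
of `C_m`. -/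

theorem mem_image_cycle_tfae (m : ℕ) [NeZero m] (hm : 3 ≤ m)
    (S : Matrix (Fin m) (Fin m) ℝ) (hS : S ∈ cyclePSDCone m) :
    (S ∈ phiImage (cycleComplex m) ↔
      ∀ i : Fin m, (negEntry S i (i + 1)).PosSemidef) ∧
    (S ∈ phiImage (cycleComplex m) ↔
      ∃ i : Fin m, (negEntry S i (i + 1)).PosSemidef) := by
  have himp1 : S ∈ phiImage (cycleComplex m) →
      ∀ i : Fin m, (negEntry S i (i + 1)).PosSemidef :=
    fun h i => negEntry_psd_of_mem hm S hS h i
  have himp3 : (∃ i : Fin m, (negEntry S i (i + 1)).PosSemidef) →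
      S ∈ phiImage (cycleComplex m) := by
    rintro ⟨i₀, hT⟩
    obtain ⟨b, c, hbc, hle⟩ := bc_exists hm S hS i₀ hT
    exact mem_phiImage_of_bc hm S (S_symm hS) hS.2 b c hbc hle
  constructor
  · exact ⟨himp1, fun h => himp3 ⟨0, h 0⟩⟩
  · exact ⟨fun h => ⟨0, himp1 h 0⟩, himp3⟩
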